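/- Let N be a positive integer, let a, b be coprime integers, and let k be an integer such that gcd(a, b + k*N) = 1. Then there exists a matrix gamma in SL_2(Z) which is congruent to the identity matrix modulo N and which sends the column vector (a, b) to (a, b + k*N). -/
import Mathlib


/-- Lemma 2.4(2): if `gcd(a,b) = 1` and `gcd(a, b + kN) = 1`, then some matrix in
`SL₂(ℤ)` congruent to the identity modulo `N` sends `(a, b)` to `(a, b + kN)`. -/
theorem exists_principal_congruence_matrix (N : ℕ) (hN : 0 < N) (a b k : ℤ)
    (hab : IsCoprime a b) (hab' : IsCoprime a (b + k * N)) :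
    ∃ A B C D : ℤ, A * D - B * C = 1 ∧
      (N : ℤ) ∣ A - 1 ∧ (N : ℤ) ∣ B ∧ (N : ℤ) ∣ C ∧ (N : ℤ) ∣ D - 1 ∧
      A * a + B * b = a ∧ C * a + D * b = b + k * N := by
  obtain ⟨z, t, h⟩ := hab.mul_right hab'
  refine ⟨1 - b * t * k * N, a * t * k * N, z * k * N, 1 + t * (b + k * N) * k * N,
    ?_, ⟨-(b * t * k), by ring⟩, ⟨a * t * k, by ring⟩, ⟨z * k, by ring⟩,
    ⟨t * (b + k * N) * k, by ring⟩, by ring, ?_⟩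
  · linear_combination -(((k : ℤ) * N) ^ 2 * t) * h
  · linear_combination (k : ℤ) * N * h
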